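/- Let R be essentially of finite type over an F-finite field, (M, κ) a Cartier module, f ∈ R, and a_e(λ) an integer. The map κ^e f^{a_e(λ)} induces a well-defined Cartier structure on Gr^λ M = τ(M, f^{λ−ε})/τ(M, f^λ) (for 0 < ε ≪ 1) if and only if a_e(λ) ≥ ⌈λ(p^e − 1)⌉. -/
import Mathlib


open Function

variable {R : Type*} [CommRing R] {M : Type*} [AddCommGroup M] [Module R M]

/-- The submodule `κ^e (f^n • N)`. -/
def opApply (κ : M →+ M) (f : R) (e n : ℕ) (N : Submodule R M) : Submodule R M :=
  Submodule.span R ((⇑κ)^[e] '' ((fun m => f ^ n • m) '' (N : Set M)))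

/-- Lemma 2.3: `κ^e f^{a}` induces a well-defined Cartier structure on
`Gr^λ M = τ(M, f^{λ−ε})/τ(M, f^λ)` (for `0 < ε ≪ 1`) iff `a ≥ ⌈λ(p^e − 1)⌉`.
The test module filtration `τ` is axiomatized by: it is decreasing, it is an
`F`-jumping filtration at `λ` (`τ(λ−ε') = τ(λ−ε)` for all `0 < ε' ≤ ε`,
`τ(λ) ≠ τ(λ−ε)`), and it satisfies the combined Briançon–Skoda identity
`κ^e f^n τ(M,f^μ) = τ(M, f^{(μ+n)/p^e})`. -/
theorem cartier_structure_on_graded_iff (p : ℕ) (hp : p.Prime) [CharP R p]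
    (κ : M →+ M) (hκ : ∀ (r : R) (m : M), κ (r ^ p • m) = r • κ m)
    (f : R) (τ : ℚ → Submodule R M)
    (hdec : ∀ μ ν : ℚ, 0 ≤ μ → μ ≤ ν → τ ν ≤ τ μ)
    (hBS : ∀ μ : ℚ, 0 ≤ μ → ∀ e n : ℕ,
      opApply κ f e n (τ μ) = τ ((μ + n) / (p : ℚ) ^ e))
    (lam : ℚ) (hlam : 0 ≤ lam)
    (ε : ℚ) (hε : 0 < ε) (hεlam : ε ≤ lam)
    (hsmall : ∀ ε' : ℚ, 0 < ε' → ε' ≤ ε → τ (lam - ε') = τ (lam - ε))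
    (hjump : τ lam ≠ τ (lam - ε))
    (e : ℕ) (he : 1 ≤ e) (a : ℕ) :
    (opApply κ f e a (τ (lam - ε)) ≤ τ (lam - ε)
        ∧ opApply κ f e a (τ lam) ≤ τ lam)
      ↔ ⌈lam * ((p : ℚ) ^ e - 1)⌉ ≤ (a : ℤ) := by
  have hp1 : (1:ℚ) ≤ (p:ℚ) := by exact_mod_cast hp.one_le
  have hpe1 : (1:ℚ) ≤ (p:ℚ)^e := one_le_pow₀ hp1
  have hpe0 : (0:ℚ) < (p:ℚ)^e := lt_of_lt_of_le one_pos hpe1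
  rw [hBS (lam - ε) (by linarith) e a, hBS lam hlam e a]
  constructor
  · rintro ⟨h1, h2⟩
    by_contra hc
    push_neg at hc
    have hc' : (a:ℚ) < lam * ((p:ℚ)^e - 1) := by
      have := Int.lt_ceil.mp hc
      exact_mod_cast this
    set μ : ℚ := (lam + a) / (p:ℚ)^e with hμ
    have hμ0 : 0 ≤ μ := div_nonneg (by positivity) hpe0.le
    have hμlt : μ < lam := by
      rw [hμ, div_lt_iff₀ hpe0]
      nlinarith
    have heq : τ μ = τ lam := le_antisymm h2 (hdec μ lam hμ0 hμlt.le)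
    apply hjump
    rcases le_or_gt (lam - ε) μ with hcase | hcase
    · have := hsmall (lam - μ) (by linarith) (by linarith)
      rw [show lam - (lam - μ) = μ by ring] at this
      exact heq.symm.trans this
    · have h3 : τ lam ≤ τ (lam - ε) := hdec (lam - ε) lam (by linarith) (by linarith)
      have h4 : τ (lam - ε) ≤ τ μ := hdec μ (lam - ε) hμ0 hcase.le
      exact le_antisymm h3 (h4.trans heq.le)
  · intro h
    have ha : lam * ((p:ℚ)^e - 1) ≤ (a:ℚ) := by
      have := Int.ceil_le.mp h
      exact_mod_cast this
    constructor
    · apply hdec (lam - ε) _ (by linarith)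
      rw [le_div_iff₀ hpe0]
      nlinarith
    · apply hdec lam _ hlam
      rw [le_div_iff₀ hpe0]
      nlinarith
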